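/- Fix λ ∈ ℝ and set ℓ = −1/2 + iλ. Then for every m₀ > 0 there is a constant C such that |Γ(m)/Γ(m+ℓ+1) − m^{−ℓ−1}(1 + (1/4 + λ²)/(2m))| ≤ C |m^{−ℓ−1}|/m² for all real m ≥ m₀. -/

import Mathlib

open Complex Filter Asymptotics Topology Finset

noncomputable section GammaRatioAux

private def sC (lam : ℝ) : ℂ := 1/2 + I * lam
private def cR (lam : ℝ) : ℝ := 1/4 + lam ^ 2

private lemma sC_re (lam : ℝ) : (sC lam).re = 1/2 := by simp [sC]
private lemma cR_pos (lam : ℝ) : 0 < cR lam := by unfold cR; positivity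
private lemma cR_eq (lam : ℝ) : (cR lam : ℂ) = sC lam - sC lam ^ 2 := by
  simp only [sC, cR]
  push_cast
  ring_nf
  rw [I_sq]
  ring

private lemma ofReal_add_sC_ne_zero {lam x : ℝ} (hx : 0 < x) (j : ℕ) :
    (x : ℂ) + sC lam + j ≠ 0 := by
  intro h
  have := congrArg Complex.re h
  simp [sC] at this
  linarith [Nat.cast_nonneg (α := ℝ) j]

private lemma ofReal_ne_neg_nat {x : ℝ} (hx : 0 < x) (n : ℕ) : (x : ℂ) ≠ -n := by
  intro h
  have := congrArg Complex.re h
  simp at this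
  linarith [Nat.cast_nonneg (α := ℝ) n, this]

private lemma sC_shift_ne_neg_nat {lam x : ℝ} (hx : 0 < x) (n : ℕ) :
    (x : ℂ) + sC lam ≠ -n := by
  intro h
  have := congrArg Complex.re h
  simp [sC] at this
  linarith [Nat.cast_nonneg (α := ℝ) n]

private lemma Gamma_shift_ne_zero {lam x : ℝ} (hx : 0 < x) :
    Complex.Gamma ((x : ℂ) + sC lam) ≠ 0 :=
  Complex.Gamma_ne_zero (sC_shift_ne_neg_nat hx)

private lemma Gamma_ofReal_ne_zero {x : ℝ} (hx : 0 < x) :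
    Complex.Gamma (x : ℂ) ≠ 0 :=
  Complex.Gamma_ne_zero (ofReal_ne_neg_nat hx)

/-- Normalized Gamma ratio. -/
private def Gfun (lam : ℝ) (y : ℝ) : ℂ :=
  Complex.Gamma y * (y : ℂ) ^ (sC lam) /
    (Complex.Gamma ((y : ℂ) + sC lam) * (1 + (cR lam : ℂ) / (2 * y)))

/-- Multiplicative step factor. -/
private def Pt (lam : ℝ) (t : ℝ) : ℂ :=
  ((1 + t : ℝ) : ℂ) ^ (sC lam) * (1 + (cR lam : ℂ) * t / 2) /
    ((1 + sC lam * t) * (1 + (cR lam : ℂ) * t / (2 * (1 + t))))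


private lemma one_add_ofReal_pos_ne_zero {x : ℝ} (hx : 0 < x) : (1 : ℂ) + (x : ℂ) ≠ 0 := by
  intro h
  have := congrArg Complex.re h
  simp at this
  linarith

private lemma one_add_sC_mul_ne_zero {lam t : ℝ} (ht : 0 < t) : (1 : ℂ) + sC lam * t ≠ 0 := by
  intro h
  have := congrArg Complex.re h
  simp [sC] at this
  linarith

private lemma cpow_sC_ne_zero {lam x : ℝ} (hx : 0 < x) : ((x : ℂ)) ^ (sC lam) ≠ 0 := by
  intro h
  rw [Complex.cpow_eq_zero_iff] at h
  exact (Complex.ofReal_ne_zero.mpr hx.ne') h.1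

private lemma Gfun_step (lam : ℝ) {y : ℝ} (hy : 0 < y) :
    Gfun lam (y + 1) = Gfun lam y * Pt lam (1 / y) := by
  have hy0 : (y : ℂ) ≠ 0 := Complex.ofReal_ne_zero.mpr hy.ne'
  have hys : (y : ℂ) + sC lam ≠ 0 := by
    simpa using ofReal_add_sC_ne_zero hy 0
  have hG1 : Complex.Gamma ((y : ℂ) + 1) = y * Complex.Gamma y :=
    Complex.Gamma_add_one _ hy0
  have hG2 : Complex.Gamma ((y : ℂ) + sC lam + 1)
      = ((y : ℂ) + sC lam) * Complex.Gamma ((y : ℂ) + sC lam) :=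
    Complex.Gamma_add_one _ hys
  have hsplit : ((y + 1 : ℝ) : ℂ) ^ (sC lam)
      = (y : ℂ) ^ (sC lam) * ((1 + 1/y : ℝ) : ℂ) ^ (sC lam) := by
    rw [← Complex.mul_cpow_ofReal_nonneg hy.le (by positivity)]
    congr 1
    push_cast
    field_simp
  have hΓy : Complex.Gamma (y : ℂ) ≠ 0 := Gamma_ofReal_ne_zero hy
  have hΓys : Complex.Gamma ((y : ℂ) + sC lam) ≠ 0 := Gamma_shift_ne_zero hy
  have hcpos : 0 < cR lam := cR_pos lam
  have hd1 : (1 : ℂ) + (cR lam : ℂ) / (2 * y) ≠ 0 := by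
    have h1 : (0:ℝ) < cR lam / (2*y) := div_pos hcpos (by linarith)
    have h2 : (1 : ℂ) + (cR lam : ℂ) / (2 * y) = ((1 + cR lam / (2*y) : ℝ) : ℂ) := by
      push_cast; ring
    rw [h2]
    exact_mod_cast (by linarith : (1 + cR lam / (2*y) : ℝ) ≠ 0)
  have hd2 : (1 : ℂ) + (cR lam : ℂ) / (2 * ((y:ℂ) + 1)) ≠ 0 := by
    have h1 : (0:ℝ) < cR lam / (2*(y+1)) := div_pos hcpos (by linarith)
    have h2 : (1 : ℂ) + (cR lam : ℂ) / (2 * ((y:ℂ)+1)) = ((1 + cR lam / (2*(y+1)) : ℝ) : ℂ) := by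
      push_cast; ring
    rw [h2]
    exact_mod_cast (by linarith : (1 + cR lam / (2*(y+1)) : ℝ) ≠ 0)
  have hst : (1 : ℂ) + sC lam * (1/y : ℝ) ≠ 0 := one_add_sC_mul_ne_zero (by positivity)
  have hd3 : (1 : ℂ) + (cR lam : ℂ) * (1/y : ℝ) / (2 * (1 + (1/y : ℝ))) ≠ 0 := by
    have h0 : (0:ℝ) < 1 + 1/y := by positivity
    have h1 : (0:ℝ) < cR lam * (1/y) / (2 * (1 + 1/y)) :=
      div_pos (mul_pos hcpos (by positivity)) (by linarith)
    have h2 : (1 : ℂ) + (cR lam : ℂ) * (1/y : ℝ) / (2 * (1 + (1/y : ℝ)))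
        = ((1 + cR lam * (1/y) / (2 * (1 + 1/y)) : ℝ) : ℂ) := by push_cast; ring
    rw [h2]
    exact_mod_cast (by linarith : (1 + cR lam * (1/y) / (2 * (1 + 1/y)) : ℝ) ≠ 0)
  have hcp : ((1 + 1/y : ℝ) : ℂ) ^ (sC lam) ≠ 0 := cpow_sC_ne_zero (by positivity)
  have h2y : (2:ℂ) * y ≠ 0 := by simpa using hy0
  have hy1 : ((y:ℂ) + 1) ≠ 0 := by
    intro h
    have := congrArg Complex.re h
    simp at this
    linarith
  have h11y : (1:ℂ) + 1 / (y:ℂ) ≠ 0 := by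
    intro h
    have := congrArg Complex.re h
    simp [Complex.div_re] at this
    have hp : 0 < y⁻¹ := inv_pos.mpr hy
    linarith
  have h2yc : 2 * (y:ℂ) + (cR lam : ℂ) ≠ 0 := by
    intro h
    have := congrArg Complex.re h
    simp at this
    linarith
  have h2y1c : 2 * ((y:ℂ) + 1) + (cR lam : ℂ) ≠ 0 := by
    intro h
    have := congrArg Complex.re h
    simp at this
    linarith
  unfold Gfun Pt
  have harg : ((y:ℂ) + 1 + sC lam) = (y:ℂ) + sC lam + 1 := by ring
  push_cast at hG1 hG2 hsplit hst hd1 hd2 hd3 hcp ⊢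
  rw [harg, hG1, hG2, hsplit]
  have r1 : (1:ℂ) + (cR lam : ℂ)/(2*((y:ℂ)+1)) = (2*((y:ℂ)+1)+(cR lam:ℂ))/(2*((y:ℂ)+1)) := by
    field_simp
  have r2 : (1:ℂ) + (cR lam : ℂ)/(2*(y:ℂ)) = (2*(y:ℂ)+(cR lam:ℂ))/(2*(y:ℂ)) := by
    field_simp
  have r3 : (1:ℂ) + (cR lam : ℂ)*(1/(y:ℂ))/2 = (2*(y:ℂ)+(cR lam:ℂ))/(2*(y:ℂ)) := by
    field_simp
  have r4 : (1:ℂ) + sC lam * (1/(y:ℂ)) = ((y:ℂ)+ sC lam)/(y:ℂ) := by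
    field_simp
  have hb : (1:ℂ) + 1/(y:ℂ) = ((y:ℂ)+1)/(y:ℂ) := by field_simp
  have r5 : (1:ℂ) + (cR lam : ℂ)*(1/(y:ℂ))/(2*(1+1/(y:ℂ)))
      = (2*((y:ℂ)+1)+(cR lam:ℂ))/(2*((y:ℂ)+1)) := by
    rw [hb]
    field_simp
  rw [r1, r2, r3, r4, r5]
  set B := ((1:ℂ) + 1/(y:ℂ)) ^ sC lam with hBdef
  have hBne : B ≠ 0 := by
    rw [hBdef, hb]
    intro h
    rw [Complex.cpow_eq_zero_iff] at h
    exact (div_ne_zero hy1 hy0) h.1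
  field_simp
  rw [mul_div_assoc, div_self (by rw [mul_comm]; exact h2yc), mul_one]


private lemma Gamma_prod (z : ℂ) (hz : ∀ j : ℕ, z + j ≠ 0) (n : ℕ) :
    Complex.Gamma (z + n + 1) = Complex.Gamma z * ∏ j ∈ Finset.range (n+1), (z + j) := by
  induction n with
  | zero => simpa [mul_comm] using Complex.Gamma_add_one z (by simpa using hz 0)
  | succ n ih =>
      have hnz : z + (n:ℂ) + 1 ≠ 0 := by
        have := hz (n+1)
        push_cast at this
        intro h
        exact this (by linear_combination h)
      have hcast : ((n+1:ℕ):ℂ) = (n:ℂ)+1 := by push_cast; ring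
      rw [hcast, show z + ((n:ℂ)+1) + 1 = (z + n + 1) + 1 by ring,
        Complex.Gamma_add_one _ hnz, ih]
      conv_rhs => rw [Finset.prod_range_succ]
      rw [hcast]
      ring

private lemma prod_ne_zero_of_re_pos {z : ℂ} (hz : 0 < z.re) (n : ℕ) :
    ∏ j ∈ Finset.range (n+1), (z + j) ≠ 0 := by
  apply Finset.prod_ne_zero_iff.mpr
  intro j _
  intro h
  have := congrArg Complex.re h
  simp at this
  linarith [Nat.cast_nonneg (α := ℝ) j]

private lemma z_add_nat_ne_zero {z : ℂ} (hz : 0 < z.re) (j : ℕ) : z + j ≠ 0 := by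
  intro h
  have := congrArg Complex.re h
  simp at this
  linarith [Nat.cast_nonneg (α := ℝ) j]

private lemma tendsto_gamma_ratio (z : ℂ) (hz : 0 < z.re) :
    Tendsto (fun n : ℕ => Complex.Gamma (z + n + 1) / ((n:ℂ) ^ z * (n.factorial : ℂ)))
      atTop (𝓝 1) := by
  have hΓ : Complex.Gamma z ≠ 0 := by
    apply Complex.Gamma_ne_zero
    intro m h
    have := congrArg Complex.re h
    simp at this
    linarith [Nat.cast_nonneg (α := ℝ) m]
  have h := Complex.GammaSeq_tendsto_Gamma z
  have h2 : Tendsto (fun n => Complex.Gamma z / Complex.GammaSeq z n) atTop (𝓝 1) := by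
    have h3 := (tendsto_const_nhds (x := Complex.Gamma z) (f := atTop (α := ℕ))).div h hΓ
    rw [div_self hΓ] at h3
    exact h3
  apply h2.congr'
  filter_upwards [eventually_ge_atTop 1] with n hn
  have hn0 : (n:ℂ) ≠ 0 := Nat.cast_ne_zero.mpr (by omega)
  have hnz : (n:ℂ) ^ z ≠ 0 := by
    intro h'
    rw [Complex.cpow_eq_zero_iff] at h'
    exact hn0 h'.1
  have hfact : ((n.factorial : ℂ)) ≠ 0 := Nat.cast_ne_zero.mpr n.factorial_ne_zero
  have hprod := prod_ne_zero_of_re_pos hz n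
  rw [Complex.GammaSeq, Gamma_prod z (z_add_nat_ne_zero hz) n]
  field_simp

private lemma tendsto_H (lam : ℝ) (x : ℝ) (hx : 0 < x) :
    Tendsto (fun n : ℕ => Complex.Gamma ((x + n + 1 : ℝ) : ℂ)
        * (((x + n + 1 : ℝ)) : ℂ) ^ (sC lam)
      / Complex.Gamma (((x + n + 1 : ℝ) : ℂ) + sC lam)) atTop (𝓝 1) := by
  have hx1 : 0 < (x:ℂ).re := by simpa using hx
  have hx2 : 0 < ((x:ℂ) + sC lam).re := by simp [sC]; linarith
  have h1 := tendsto_gamma_ratio (x:ℂ) hx1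
  have h2 := tendsto_gamma_ratio ((x:ℂ) + sC lam) hx2
  have h3 : Tendsto (fun n : ℕ =>
      (Complex.Gamma ((x:ℂ) + n + 1) / ((n:ℂ) ^ (x:ℂ) * (n.factorial : ℂ)))
        / (Complex.Gamma ((x:ℂ) + sC lam + n + 1)
            / ((n:ℂ) ^ ((x:ℂ) + sC lam) * (n.factorial : ℂ)))) atTop (𝓝 1) := by
    have h3' := h1.div h2 one_ne_zero
    rw [div_one] at h3'
    exact h3'
  have h4 : Tendsto (fun n : ℕ => ((x + n + 1)/n : ℝ)) atTop (𝓝 1) := by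
    have hn : Tendsto (fun n : ℕ => ((n:ℝ))) atTop atTop := tendsto_natCast_atTop_atTop
    have hd : Tendsto (fun n : ℕ => (x+1)/(n:ℝ)) atTop (𝓝 0) :=
      Tendsto.div_atTop tendsto_const_nhds hn
    have := hd.add (tendsto_const_nhds (x := (1:ℝ)))
    rw [zero_add] at this
    apply this.congr'
    filter_upwards [eventually_ge_atTop 1] with n hn1
    have : (n:ℝ) ≠ 0 := Nat.cast_ne_zero.mpr (by omega)
    field_simp
    ring
  have h5 : Tendsto (fun n : ℕ => ((((x + n + 1)/n : ℝ)) : ℂ) ^ (sC lam)) atTop (𝓝 1) := by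
    have hcont : ContinuousAt (fun z : ℂ => z ^ (sC lam)) 1 :=
      continuousAt_cpow_const (by simp [Complex.mem_slitPlane_iff])
    have h6 : Tendsto (fun n : ℕ => ((((x + n + 1)/n : ℝ)) : ℂ)) atTop (𝓝 1) := by
      have h6' := (Complex.continuous_ofReal.tendsto (1:ℝ)).comp h4
      rw [Complex.ofReal_one] at h6'
      exact h6'
    have h5' := hcont.tendsto.comp h6
    rw [Complex.one_cpow] at h5'
    exact h5'
  have h7 := h3.mul h5
  rw [mul_one] at h7
  apply h7.congr'
  filter_upwards [eventually_ge_atTop 1] with n hn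
  have hnR : (0:ℝ) < n := by exact_mod_cast Nat.pos_of_ne_zero (by omega)
  have hn0 : (n:ℂ) ≠ 0 := Nat.cast_ne_zero.mpr (by omega)
  have hnx : (n:ℂ) ^ (x:ℂ) ≠ 0 := by
    intro h'
    rw [Complex.cpow_eq_zero_iff] at h'
    exact hn0 h'.1
  have hns : (n:ℂ) ^ (sC lam) ≠ 0 := by
    intro h'
    rw [Complex.cpow_eq_zero_iff] at h'
    exact hn0 h'.1
  have hfact : ((n.factorial : ℂ)) ≠ 0 := Nat.cast_ne_zero.mpr n.factorial_ne_zero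
  have hΓd : Complex.Gamma ((x:ℂ) + sC lam + n + 1) ≠ 0 := by
    apply Complex.Gamma_ne_zero
    intro m h'
    have := congrArg Complex.re h'
    simp [sC] at this
    have := Nat.cast_nonneg (α := ℝ) m
    have := Nat.cast_nonneg (α := ℝ) n
    linarith
  have hsplit2 : (n:ℂ) ^ ((x:ℂ) + sC lam) = (n:ℂ) ^ (x:ℂ) * (n:ℂ) ^ (sC lam) :=
    Complex.cpow_add _ _ hn0
  have hsplit3 : (((x + n + 1 : ℝ)) : ℂ) ^ (sC lam)
      = (n:ℂ) ^ (sC lam) * ((((x + n + 1)/n : ℝ)) : ℂ) ^ (sC lam) := by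
    rw [← Complex.ofReal_natCast, ← Complex.mul_cpow_ofReal_nonneg hnR.le (by positivity)]
    congr 2
    push_cast
    field_simp
  have harg1 : (((x + n + 1 : ℝ)) : ℂ) = (x:ℂ) + n + 1 := by push_cast; ring
  have harg2 : (((x + n + 1 : ℝ)) : ℂ) + sC lam = (x:ℂ) + sC lam + n + 1 := by push_cast; ring
  rw [hsplit3, hsplit2, harg1,
    show ((x:ℂ) + (n:ℂ) + 1 + sC lam) = (x:ℂ) + sC lam + (n:ℂ) + 1 by ring]
  field_simp


private lemma tendsto_Gfun (lam : ℝ) {y : ℝ} (hy : 1 < y) :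
    Tendsto (fun n : ℕ => Gfun lam (y + n)) atTop (𝓝 1) := by
  have hx : 0 < y - 1 := by linarith
  have hH := tendsto_H lam (y - 1) hx
  have hyn : ∀ n : ℕ, ((y - 1) + (n:ℝ) + 1 : ℝ) = y + n := by intro n; ring
  have hc : Tendsto (fun n : ℕ => ((1 + (cR lam : ℝ)/(2 * (y + n)) : ℝ))) atTop (𝓝 1) := by
    have hn : Tendsto (fun n : ℕ => (y + n : ℝ)) atTop atTop :=
      tendsto_atTop_add_const_left _ _ tendsto_natCast_atTop_atTop
    have h2 : Tendsto (fun n : ℕ => (2 * (y + n) : ℝ)) atTop atTop := by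
      apply Tendsto.const_mul_atTop two_pos hn
    have hd := Tendsto.div_atTop (tendsto_const_nhds (x := (cR lam : ℝ))) h2
    have h3 := hd.const_add (1:ℝ)
    simpa using h3
  have hcC : Tendsto (fun n : ℕ => (((1 + (cR lam : ℝ)/(2 * (y + n)) : ℝ)) : ℂ)) atTop (𝓝 1) := by
    have h4 := (Complex.continuous_ofReal.tendsto (1:ℝ)).comp hc
    rw [Complex.ofReal_one] at h4
    exact h4
  have h := hH.div hcC one_ne_zero
  rw [div_one] at h
  apply h.congr
  intro n
  simp only [hyn, Pi.div_apply]
  unfold Gfun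
  rw [div_div]
  congr 1
  push_cast
  ring


private lemma exp_cubic_bound (w : ℂ) (hw : ‖w‖ ≤ 1) :
    ‖Complex.exp w - (1 + w + w^2/2)‖ ≤ ‖w‖^3 := by
  have h := Complex.exp_bound (x := w) (by simpa using hw) (n := 3) (by norm_num)
  have h2 : (∑ m ∈ Finset.range 3, w ^ m / m.factorial) = 1 + w + w^2/2 := by
    simp [Finset.sum_range_succ]
  rw [h2] at h
  have h3 : ‖w‖ ^ 3 * ((3:ℕ).succ * (((3:ℕ).factorial * 3 : ℝ))⁻¹) ≤ ‖w‖ ^ 3 := by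
    norm_num [Nat.factorial]
    nlinarith [norm_nonneg w, pow_nonneg (norm_nonneg w) 3]
  exact le_trans h h3

private lemma log_cubic_bound {t : ℝ} (ht : 0 < t) (ht4 : t ≤ 1/4) :
    |Real.log (1+t) - (t - t^2/2)| ≤ 2*t^3 := by
  have habs : |(-t)| < 1 := by rw [_root_.abs_neg, _root_.abs_of_pos ht]; linarith
  have h2 := Real.abs_log_sub_add_sum_range_le habs 2
  simp [Finset.sum_range_succ] at h2
  rw [_root_.abs_of_pos ht] at h2
  have h3 : |Real.log (1+t) - (t - t^2/2)| = |-t + t^2/(1+1) + Real.log (1+t)| := by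
    congr 1; ring
  rw [h3]
  refine le_trans h2 ?_
  rw [div_le_iff₀ (by linarith)]
  nlinarith [pow_pos ht 3]

private lemma cpow_eq_exp {t : ℝ} (ht : 0 < t) (s : ℂ) :
    ((1 + t : ℝ) : ℂ) ^ s = Complex.exp (s * (Real.log (1+t) : ℂ)) := by
  rw [Complex.cpow_def_of_ne_zero
    (by exact_mod_cast (by linarith : (1+t:ℝ) ≠ 0)), Complex.ofReal_log (by linarith)]
  ring_nf

set_option maxHeartbeats 2000000 in
private lemma Pt_bound (lam : ℝ) :
    ∃ K : ℝ, 0 < K ∧ ∃ δ : ℝ, 0 < δ ∧ δ ≤ 1 ∧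
      ∀ t : ℝ, 0 < t → t ≤ δ → ‖Pt lam t - 1‖ ≤ K * t^3 := by
  have hcC := cR_eq lam
  have hc0 : 0 < cR lam := cR_pos lam
  set s : ℂ := sC lam with hs
  set c : ℝ := cR lam with hcdef
  set σ : ℝ := ‖s‖ with hσ
  have hσ0 : (0:ℝ) ≤ σ := norm_nonneg s
  set Q0 : ℂ := ((s^2 - s)/2) * ((s - s^2) + 2) + s * (s - s^2) with hQ0
  set Q1 : ℂ := ((s^2 - s)/2) * (s - s^2) with hQ1
  set CA : ℝ := σ^3 + 2*σ + σ^2 with hCA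
  have hCA0 : 0 ≤ CA := by positivity
  refine ⟨2*(2+c)*CA + ‖Q0‖ + ‖Q1‖ + 1, by positivity,
    min (1/4) (1/(2*(σ+1))), by positivity,
    le_trans (min_le_left _ _) (by norm_num), ?_⟩
  intro t ht hδ
  have ht4 : t ≤ 1/4 := le_trans hδ (min_le_left _ _)
  have ht1 : t ≤ 1 := by linarith
  have htσ : σ * t ≤ 1/2 := by
    have h1 : t ≤ 1/(2*(σ+1)) := le_trans hδ (min_le_right _ _)
    rw [le_div_iff₀ (by linarith)] at h1
    nlinarith
  have h1t : (0:ℝ) < 1 + t := by linarith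
  set L : ℝ := Real.log (1+t) with hL
  have hL0 : 0 ≤ L := Real.log_nonneg (by linarith)
  have hLt : L ≤ t := by
    have := Real.log_le_sub_one_of_pos h1t
    simpa using this
  have hseries : |L - (t - t^2/2)| ≤ 2*t^3 := log_cubic_bound ht ht4
  set w : ℂ := s * (L : ℂ) with hw
  have hwn : ‖w‖ = σ * |L| := by rw [hw, norm_mul, Complex.norm_real, Real.norm_eq_abs]
  have hwt : ‖w‖ ≤ σ * t := by
    rw [hwn, _root_.abs_of_nonneg hL0]
    exact mul_le_mul_of_nonneg_left hLt hσ0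
  have hw1 : ‖w‖ ≤ 1 := by linarith
  have hexp : ‖Complex.exp w - (1 + w + w^2/2)‖ ≤ σ^3 * t^3 := by
    refine le_trans (exp_cubic_bound w hw1) ?_
    calc ‖w‖^3 ≤ (σ*t)^3 := pow_le_pow_left₀ (norm_nonneg w) hwt 3
      _ = σ^3 * t^3 := by ring
  set A : ℂ := ((1 + t : ℝ) : ℂ) ^ s with hA
  have hAexp : A = Complex.exp w := by rw [hA, cpow_eq_exp ht s, hw]
  -- bound on |L - t|
  have hLt2 : |L - t| ≤ t^2 := by
    have h1 : |L - t| ≤ |L - (t - t^2/2)| + t^2/2 := by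
      have : L - t = (L - (t - t^2/2)) + (-(t^2/2)) := by ring
      rw [this]
      refine le_trans (_root_.abs_add_le _ _) ?_
      simp [_root_.abs_of_nonneg (by positivity : (0:ℝ) ≤ t^2/2)]
    nlinarith
  have hApoly : ‖A - (1 + s*t + (s^2 - s)/2 * t^2)‖ ≤ CA * t^3 := by
    have hdecomp : A - (1 + s*t + (s^2 - s)/2 * t^2)
        = (Complex.exp w - (1 + w + w^2/2)) + s * ((L:ℂ) - (t:ℂ) + (t:ℂ)^2/2)
          + ((w^2) - s^2*(t:ℂ)^2)/2 := by
      rw [hAexp, hw]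
      ring
    have hb1 : ‖s * ((L:ℂ) - (t:ℂ) + (t:ℂ)^2/2)‖ ≤ σ * (2*t^3) := by
      rw [norm_mul]
      refine mul_le_mul_of_nonneg_left ?_ hσ0
      have : ((L:ℂ) - (t:ℂ) + (t:ℂ)^2/2) = ((L - (t - t^2/2) : ℝ) : ℂ) := by push_cast; ring
      rw [this, Complex.norm_real, Real.norm_eq_abs]
      exact hseries
    have hb2 : ‖((w^2) - s^2*(t:ℂ)^2)/2‖ ≤ σ^2 * t^3 := by
      have hfac : (w^2) - s^2*(t:ℂ)^2 = s^2 * (((L:ℂ) - t) * ((L:ℂ) + t)) := by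
        rw [hw]; ring
      rw [hfac, norm_div, norm_mul, norm_pow]
      have h1 : ‖((L:ℂ) - t) * ((L:ℂ) + t)‖ ≤ t^2 * (2*t) := by
        rw [norm_mul]
        have e1 : ((L:ℂ) - t) = ((L - t : ℝ) : ℂ) := by push_cast; ring
        have e2 : ((L:ℂ) + t) = ((L + t : ℝ) : ℂ) := by push_cast; ring
        rw [e1, e2, Complex.norm_real, Real.norm_eq_abs, Complex.norm_real, Real.norm_eq_abs]
        have h2 : |L + t| ≤ 2*t := by rw [_root_.abs_of_nonneg (by linarith)]; linarith
        exact mul_le_mul hLt2 h2 (_root_.abs_nonneg _) (by positivity)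
      have h2 : ‖(2:ℂ)‖ = 2 := by norm_num
      rw [h2]
      calc σ^2 * ‖((L:ℂ) - t) * ((L:ℂ) + t)‖ / 2 ≤ σ^2 * (t^2*(2*t)) / 2 := by
            gcongr
        _ = σ^2 * t^3 := by ring
    calc ‖A - (1 + s*t + (s^2 - s)/2 * t^2)‖
        ≤ ‖Complex.exp w - (1 + w + w^2/2)‖ + ‖s * ((L:ℂ) - (t:ℂ) + (t:ℂ)^2/2)‖
          + ‖((w^2) - s^2*(t:ℂ)^2)/2‖ := by
          rw [hdecomp]
          exact le_trans (norm_add_le _ _) (by gcongr; exact norm_add_le _ _)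
      _ ≤ σ^3 * t^3 + σ * (2*t^3) + σ^2 * t^3 := by gcongr
      _ = CA * t^3 := by rw [hCA]; ring
  -- numerator and denominator
  set Num : ℂ := A * (2 + c*t) * (1 + t) - (1 + s*t) * (2 + (2+c)*t) with hNum
  set Den : ℂ := (1 + s*t) * (2 + (2+c)*t) with hDen
  have hpoly : (1 + s*(t:ℂ) + (s^2 - s)/2 * (t:ℂ)^2) * (2 + (c:ℂ)*t) * (1 + (t:ℂ))
      - (1 + s*(t:ℂ)) * (2 + (2+(c:ℂ))*(t:ℂ)) = (t:ℂ)^3 * (Q0 + Q1 * t) := by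
    rw [hcC, hQ0, hQ1]
    ring
  have hNumb : ‖Num‖ ≤ (2*(2+c)*CA + ‖Q0‖ + ‖Q1‖) * t^3 := by
    have hsplit : Num = (A - (1 + s*t + (s^2 - s)/2 * t^2)) * ((2 + (c:ℂ)*t) * (1 + (t:ℂ)))
        + (t:ℂ)^3 * (Q0 + Q1 * t) := by
      rw [hNum, ← hpoly]
      ring
    have hb3 : ‖(2 + (c:ℂ)*t) * (1 + (t:ℂ))‖ ≤ (2+c) * 2 := by
      rw [norm_mul]
      have e1 : (2 + (c:ℂ)*t) = ((2 + c*t : ℝ) : ℂ) := by push_cast; ring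
      have e2 : (1 + (t:ℂ)) = ((1 + t : ℝ) : ℂ) := by push_cast; ring
      rw [e1, e2, Complex.norm_real, Real.norm_eq_abs, Complex.norm_real, Real.norm_eq_abs,
        _root_.abs_of_nonneg (by nlinarith : (0:ℝ) ≤ 2 + c*t), _root_.abs_of_nonneg (by linarith : (0:ℝ) ≤ 1+t)]
      have : c * t ≤ c := by nlinarith
      gcongr <;> linarith
    have hb4 : ‖(t:ℂ)^3 * (Q0 + Q1 * t)‖ ≤ t^3 * (‖Q0‖ + ‖Q1‖) := by
      rw [norm_mul, norm_pow, Complex.norm_real, Real.norm_eq_abs, _root_.abs_of_pos ht]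
      refine mul_le_mul_of_nonneg_left ?_ (by positivity)
      refine le_trans (norm_add_le _ _) ?_
      have : ‖Q1 * (t:ℂ)‖ ≤ ‖Q1‖ := by
        rw [norm_mul, Complex.norm_real, Real.norm_eq_abs, _root_.abs_of_pos ht]
        nlinarith [norm_nonneg Q1]
      linarith
    calc ‖Num‖ ≤ ‖(A - (1 + s*t + (s^2 - s)/2 * t^2)) * ((2 + (c:ℂ)*t) * (1 + (t:ℂ)))‖
        + ‖(t:ℂ)^3 * (Q0 + Q1 * t)‖ := by rw [hsplit]; exact norm_add_le _ _
      _ ≤ (CA * t^3) * ((2+c)*2) + t^3 * (‖Q0‖ + ‖Q1‖) := by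
          rw [norm_mul]
          gcongr
      _ = (2*(2+c)*CA + ‖Q0‖ + ‖Q1‖) * t^3 := by ring
  have hDenb : (1:ℝ) ≤ ‖Den‖ := by
    rw [hDen, norm_mul]
    have h1 : (1:ℝ)/2 ≤ ‖1 + s*(t:ℂ)‖ := by
      have h2 : ‖s*(t:ℂ)‖ ≤ 1/2 := by
        rw [norm_mul, Complex.norm_real, Real.norm_eq_abs, _root_.abs_of_pos ht]
        exact htσ
      have h3 : (1:ℝ) ≤ ‖(1 : ℂ) + s*(t:ℂ)‖ + ‖s*(t:ℂ)‖ := by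
        calc (1:ℝ) = ‖(1 + s*(t:ℂ)) + (-(s*(t:ℂ)))‖ := by norm_num
          _ ≤ _ := by refine le_trans (norm_add_le _ _) ?_; rw [norm_neg]
      linarith
    have h4 : (2:ℝ) ≤ ‖2 + (2+(c:ℂ))*(t:ℂ)‖ := by
      have e1 : (2 + (2+(c:ℂ))*(t:ℂ)) = ((2 + (2+c)*t : ℝ) : ℂ) := by push_cast; ring
      rw [e1, Complex.norm_real, Real.norm_eq_abs, _root_.abs_of_nonneg (by nlinarith : (0:ℝ) ≤ 2 + (2+c)*t)]
      nlinarith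
    nlinarith [norm_nonneg (1 + s*(t:ℂ)), norm_nonneg (2 + (2+(c:ℂ))*(t:ℂ))]
  have hDen0 : Den ≠ 0 := by
    intro h
    rw [h] at hDenb
    simp at hDenb
    linarith
  have hfrac : Pt lam t - 1 = Num / Den := by
    rw [hNum, hDen]
    unfold Pt
    rw [← hs, ← hcdef, ← hA]
    have hd1 : (1 + s*(t:ℂ)) ≠ 0 := by
      intro h
      have : ‖(1 + s*(t:ℂ))‖ = 0 := by rw [h]; simp
      rw [this] at *
      have h1 : (1:ℝ)/2 ≤ (0:ℝ) := by
        have h2 : ‖s*(t:ℂ)‖ ≤ 1/2 := by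
          rw [norm_mul, Complex.norm_real, Real.norm_eq_abs, _root_.abs_of_pos ht]
          exact htσ
        have h3 : (1:ℝ) ≤ (0:ℝ) + ‖s*(t:ℂ)‖ := by
          calc (1:ℝ) = ‖(1 + s*(t:ℂ)) + (-(s*(t:ℂ)))‖ := by norm_num
            _ ≤ ‖(1 + s*(t:ℂ))‖ + ‖s*(t:ℂ)‖ := by
                refine le_trans (norm_add_le _ _) ?_; rw [norm_neg]
            _ = (0:ℝ) + ‖s*(t:ℂ)‖ := by rw [h]; simp
        linarith
      linarith
    have hd2 : (1 + (c:ℂ)*(t:ℂ)/(2*(1+(t:ℂ)))) ≠ 0 := by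
      have e1 : (1 + (c:ℂ)*(t:ℂ)/(2*(1+(t:ℂ)))) = ((1 + c*t/(2*(1+t)) : ℝ) : ℂ) := by
        push_cast; ring
      rw [e1]
      have : (0:ℝ) < 1 + c*t/(2*(1+t)) := by positivity
      exact_mod_cast this.ne'
    have hd3 : (1:ℂ) + (t:ℂ) ≠ 0 := by
      have : ((1+t:ℝ):ℂ) ≠ 0 := by exact_mod_cast h1t.ne'
      push_cast at this
      exact this
    have hd4 : (2 + (2+(c:ℂ))*(t:ℂ)) ≠ 0 := by
      have e1 : (2 + (2+(c:ℂ))*(t:ℂ)) = ((2 + (2+c)*t : ℝ) : ℂ) := by push_cast; ring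
      rw [e1]
      have : (0:ℝ) < 2 + (2+c)*t := by nlinarith
      exact_mod_cast this.ne'
    have hd5 : (2*(1+(t:ℂ))+(c:ℂ)*(t:ℂ)) ≠ 0 := by
      have e1 : (2*(1+(t:ℂ))+(c:ℂ)*(t:ℂ)) = ((2*(1+t) + c*t : ℝ) : ℂ) := by push_cast; ring
      rw [e1]
      have : (0:ℝ) < 2*(1+t) + c*t := by nlinarith
      exact_mod_cast this.ne'
    have e5 : (1 + (c:ℂ)*(t:ℂ)/(2*(1+(t:ℂ)))) = (2*(1+(t:ℂ))+(c:ℂ)*(t:ℂ))/(2*(1+(t:ℂ))) := by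
      field_simp
    rw [e5]
    have hd1' : 1 + (t:ℂ)*s ≠ 0 := by rw [mul_comm]; exact hd1
    have hd4' : 2 + (t:ℂ)*(2+c) ≠ 0 := by rw [mul_comm]; exact hd4
    field_simp
    ring
  rw [hfrac, norm_div]
  calc ‖Num‖ / ‖Den‖ ≤ ‖Num‖ / 1 := by gcongr
    _ = ‖Num‖ := by rw [div_one]
    _ ≤ (2*(2+c)*CA + ‖Q0‖ + ‖Q1‖) * t^3 := hNumb
    _ ≤ (2*(2+c)*CA + ‖Q0‖ + ‖Q1‖ + 1) * t^3 := by
        have h9 : (0:ℝ) < t^3 := pow_pos ht 3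
        nlinarith


private lemma sum_cubic_bound {y : ℝ} (hy : 1 ≤ y) (N : ℕ) :
    ∑ n ∈ Finset.range N, 1/(y+n)^3 ≤ 2/y^2 := by
  have hy0 : 0 < y := by linarith
  have key : ∀ n : ℕ, 1/(y+n)^3 ≤ (1/y) * (1/(y+n-1/2) - 1/(y+(n+1:ℕ)-1/2)) := by
    intro n
    have hn0 : (0:ℝ) ≤ (n:ℝ) := Nat.cast_nonneg n
    have ha1 : (0:ℝ) < y + n - 1/2 := by linarith
    have ha2 : (0:ℝ) < y + (n+1:ℕ) - 1/2 := by push_cast; linarith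
    have ha3 : (0:ℝ) < y + n := by linarith
    have e1 : 1/(y+n-1/2) - 1/(y+(n+1:ℕ)-1/2) = 1/((y+n-1/2)*(y+n+1/2)) := by
      rw [div_sub_div _ _ ha1.ne' ha2.ne']
      push_cast
      rw [show y + (n+1) - 1/2 = y + n + 1/2 by ring]
      congr 1
      ring
    rw [e1, div_mul_div_comm, one_mul]
    apply one_div_le_one_div_of_le (by positivity)
    nlinarith [mul_nonneg hn0 (sq_nonneg (y+(n:ℝ))), sq_nonneg (y+(n:ℝ))]
  calc ∑ n ∈ Finset.range N, 1/(y+n)^3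
      ≤ ∑ n ∈ Finset.range N, (1/y) * (1/(y+n-1/2) - 1/(y+(n+1:ℕ)-1/2)) :=
        Finset.sum_le_sum (fun n _ => key n)
    _ = (1/y) * (1/(y+(0:ℕ)-1/2) - 1/(y+(N:ℕ)-1/2)) := by
        rw [← Finset.mul_sum, Finset.sum_range_sub' (fun n : ℕ => 1/(y+n-1/2))]
    _ ≤ 2/y^2 := by
        have hN : (0:ℝ) ≤ (N:ℝ) := Nat.cast_nonneg N
        have ha1 : (0:ℝ) < y - 1/2 := by linarith
        have ha2 : (0:ℝ) < y + N - 1/2 := by linarith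
        have h1 : 1/(y+(0:ℕ)-1/2) - 1/(y+(N:ℕ)-1/2) ≤ 1/(y-1/2) := by
          push_cast
          rw [add_zero]
          have : (0:ℝ) ≤ 1/(y+N-1/2) := by positivity
          linarith
        have h2 : (0:ℝ) < 1/y := by positivity
        calc (1/y) * (1/(y+(0:ℕ)-1/2) - 1/(y+(N:ℕ)-1/2)) ≤ (1/y) * (1/(y-1/2)) := by
              apply mul_le_mul_of_nonneg_left h1 h2.le
          _ ≤ 2/y^2 := by
              rw [div_mul_div_comm, mul_one, div_le_div_iff₀ (by positivity) (by positivity)]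
              nlinarith
    
private lemma exp_neg_two_le {x : ℝ} (h0 : 0 ≤ x) (h2 : x ≤ 1/2) :
    Real.exp (-(2*x)) ≤ 1 - x := by
  have h3 : 2*x + 1 ≤ Real.exp (2*x) := by
    have := Real.add_one_le_exp (2*x)
    linarith
  have hE : Real.exp (-(2*x)) * Real.exp (2*x) = 1 := by
    rw [← Real.exp_add]
    simp
  have h8 : 1 ≤ (1-x)*(2*x+1) := by nlinarith
  nlinarith [Real.exp_pos (-(2*x)), Real.exp_pos (2*x),
    mul_le_mul_of_nonneg_left h3 (Real.exp_pos (-(2*x))).le]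

private lemma Gfun_tail (lam : ℝ) : ∃ M C₂ : ℝ, 2 ≤ M ∧ 0 ≤ C₂ ∧
    ∀ y : ℝ, M ≤ y → ‖Gfun lam y - 1‖ ≤ C₂ / y^2 := by
  obtain ⟨K, hK, δ, hδ0, hδ1, hbound⟩ := Pt_bound lam
  set M : ℝ := max 2 (max (1/δ) (2*K+2)) with hM
  have hM2 : (2:ℝ) ≤ M := le_max_left _ _
  have hM0 : (0:ℝ) < M := by linarith
  set U : ℝ := Real.exp (4*K/M^2) with hU
  have hU1 : (1:ℝ) ≤ U := by
    rw [hU, ← Real.exp_zero]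
    apply Real.exp_le_exp.mpr
    positivity
  -- step bound valid for all z ≥ M
  have hPz : ∀ z : ℝ, M ≤ z → ‖Pt lam (1/z) - 1‖ ≤ K/z^3 ∧ K/z^3 ≤ 1/2 := by
    intro z hz
    have hz0 : (0:ℝ) < z := lt_of_lt_of_le hM0 hz
    have ht0 : (0:ℝ) < 1/z := by positivity
    have htδ : 1/z ≤ δ := by
      have h1 : (1:ℝ)/δ ≤ M := le_trans (le_max_left _ _) (le_max_right _ _)
      rw [div_le_iff₀ hz0]
      rw [div_le_iff₀ hδ0] at h1
      nlinarith [mul_nonneg (sub_nonneg.mpr hz) hδ0.le]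
    have hb := hbound (1/z) ht0 htδ
    constructor
    · refine le_trans hb (le_of_eq ?_)
      rw [div_pow, one_pow]
      field_simp
    · have h2 : 2*K+2 ≤ z := le_trans (le_trans (le_max_right _ _) (le_max_right _ _)) hz
      have h3 : z ≤ z^3 := by
        nlinarith [mul_nonneg (mul_nonneg hz0.le (by linarith : (0:ℝ) ≤ z-1))
          (by linarith : (0:ℝ) ≤ z+1)]
      rw [div_le_iff₀ (by positivity)]
      nlinarith
  have hU0 : (0:ℝ) < U := Real.exp_pos _
  refine ⟨M, 2*U*K, hM2, by nlinarith, ?_⟩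
  intro y hy
  have hy0 : (0:ℝ) < y := lt_of_lt_of_le hM0 hy
  have hy1 : (1:ℝ) < y := by linarith
  have hy2 : (1:ℝ) ≤ y := by linarith
  set a : ℕ → ℂ := fun n => Gfun lam (y + n) with haDef
  have ha : ∀ n : ℕ, a (n+1) = a n * Pt lam (1/(y+n)) := by
    intro n
    have h1 : y + ((n+1:ℕ):ℝ) = (y + n) + 1 := by push_cast; ring
    have h2 : (0:ℝ) < y + n := by
      have : (0:ℝ) ≤ (n:ℝ) := Nat.cast_nonneg n
      linarith
    show Gfun lam (y + ((n+1:ℕ):ℝ)) = _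
    rw [h1]
    exact Gfun_step lam h2
  have hyn : ∀ n : ℕ, M ≤ y + n := by
    intro n
    have : (0:ℝ) ≤ (n:ℝ) := Nat.cast_nonneg n
    linarith
  have hyn1 : ∀ n : ℕ, (1:ℝ) ≤ y + n := by
    intro n
    have := hyn n
    linarith
  have htendsto : Tendsto (fun n : ℕ => ‖a n‖) atTop (𝓝 1) := by
    have h1 := (tendsto_Gfun lam hy1).norm
    simpa using h1
  -- uniform norm upper bound
  have hUb : ∀ z : ℝ, M ≤ z → ‖Gfun lam z‖ ≤ U := by
    intro z hz
    have hz1 : (1:ℝ) < z := by linarith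
    have hz0 : (0:ℝ) < z := by linarith
    set b : ℕ → ℂ := fun n => Gfun lam (z + n) with hbDef
    have hb : ∀ n : ℕ, b (n+1) = b n * Pt lam (1/(z+n)) := by
      intro n
      have h1 : z + ((n+1:ℕ):ℝ) = (z + n) + 1 := by push_cast; ring
      have h2 : (0:ℝ) < z + n := by
        have : (0:ℝ) ≤ (n:ℝ) := Nat.cast_nonneg n
        linarith
      show Gfun lam (z + ((n+1:ℕ):ℝ)) = _
      rw [h1]
      exact Gfun_step lam h2
    have hzn : ∀ n : ℕ, M ≤ z + n := by
      intro n
      have : (0:ℝ) ≤ (n:ℝ) := Nat.cast_nonneg n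
      linarith
    have hlow : ∀ n : ℕ, ‖b 0‖ * ∏ k ∈ Finset.range n, (1 - K/(z+k)^3) ≤ ‖b n‖ := by
      intro n
      induction n with
      | zero => simp
      | succ n ih =>
          rw [Finset.prod_range_succ, hb n, norm_mul]
          have hP := hPz (z+n) (hzn n)
          have h1 : 1 - K/(z+n)^3 ≤ ‖Pt lam (1/(z+n))‖ := by
            have h2 := norm_sub_norm_le (1:ℂ) (Pt lam (1/(z+n)))
            rw [norm_sub_rev] at h2
            have h3 : ‖(1:ℂ)‖ = 1 := by norm_num
            rw [h3] at h2
            linarith [hP.1]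
          have hδn : ∀ k : ℕ, (0:ℝ) ≤ 1 - K/(z+k)^3 := by
            intro k
            have := (hPz (z+k) (hzn k)).2
            linarith
          have hprodnn : (0:ℝ) ≤ ∏ k ∈ Finset.range n, (1 - K/(z+k)^3) :=
            Finset.prod_nonneg (fun k _ => hδn k)
          rw [← mul_assoc]
          exact mul_le_mul ih h1 (hδn n) (norm_nonneg _)
    have hδn : ∀ k : ℕ, (0:ℝ) ≤ 1 - K/(z+k)^3 := by
      intro k
      have := (hPz (z+k) (hzn k)).2
      linarith
    have hprodlow : ∀ n : ℕ, Real.exp (-(4*K/z^2))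
        ≤ ∏ k ∈ Finset.range n, (1 - K/(z+k)^3) := by
      intro n
      have hsum : ∑ k ∈ Finset.range n, K/(z+k)^3 ≤ 2*K/z^2 := by
        have h1 : ∀ k : ℕ, K/(z+k)^3 = K * (1/(z+k)^3) := by
          intro k
          rw [mul_one_div]
        calc ∑ k ∈ Finset.range n, K/(z+k)^3
            = K * ∑ k ∈ Finset.range n, 1/(z+k)^3 := by
              rw [Finset.mul_sum]
              exact Finset.sum_congr rfl (fun k _ => h1 k)
          _ ≤ K * (2/z^2) := by
              apply mul_le_mul_of_nonneg_left (sum_cubic_bound (by linarith) n) hK.le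
          _ = 2*K/z^2 := by ring
      have h2 : ∏ k ∈ Finset.range n, Real.exp (-(2*(K/(z+k)^3)))
          ≤ ∏ k ∈ Finset.range n, (1 - K/(z+k)^3) := by
        apply Finset.prod_le_prod (fun k _ => (Real.exp_pos _).le)
        intro k _
        apply exp_neg_two_le
        · positivity
        · exact (hPz (z+k) (hzn k)).2
      refine le_trans ?_ h2
      rw [← Real.exp_sum]
      apply Real.exp_le_exp.mpr
      have h3 : ∑ k ∈ Finset.range n, -(2*(K/(z+k)^3))
          = -(2 * ∑ k ∈ Finset.range n, K/(z+k)^3) := by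
        rw [Finset.mul_sum, ← Finset.sum_neg_distrib]
      rw [h3]
      have h4 : 2 * ∑ k ∈ Finset.range n, K/(z+k)^3 ≤ 4*K/z^2 := by
        calc 2 * ∑ k ∈ Finset.range n, K/(z+k)^3 ≤ 2 * (2*K/z^2) := by linarith
          _ = 4*K/z^2 := by ring
      linarith
    have hblim : Tendsto (fun n : ℕ => ‖b n‖) atTop (𝓝 1) := by
      have h1 := (tendsto_Gfun lam hz1).norm
      simpa using h1
    have hle1 : ‖b 0‖ * Real.exp (-(4*K/z^2)) ≤ 1 := by
      apply ge_of_tendsto hblim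
      filter_upwards with n
      calc ‖b 0‖ * Real.exp (-(4*K/z^2))
          ≤ ‖b 0‖ * ∏ k ∈ Finset.range n, (1 - K/(z+k)^3) :=
            mul_le_mul_of_nonneg_left (hprodlow n) (norm_nonneg _)
        _ ≤ ‖b n‖ := hlow n
    have hb0 : b 0 = Gfun lam z := by
      show Gfun lam (z + ((0:ℕ):ℝ)) = Gfun lam z
      norm_num
    have hexpz : Real.exp (4*K/z^2) ≤ U := by
      rw [hU]
      apply Real.exp_le_exp.mpr
      apply div_le_div_of_nonneg_left (by linarith) (by positivity)
      nlinarith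
    rw [← hb0]
    have hEz := Real.exp_pos (-(4*K/z^2))
    have hEE : Real.exp (-(4*K/z^2)) * Real.exp (4*K/z^2) = 1 := by
      rw [← Real.exp_add]
      simp
    calc ‖b 0‖ = ‖b 0‖ * (Real.exp (-(4*K/z^2)) * Real.exp (4*K/z^2)) := by
          rw [hEE, mul_one]
      _ = (‖b 0‖ * Real.exp (-(4*K/z^2))) * Real.exp (4*K/z^2) := by ring
      _ ≤ 1 * Real.exp (4*K/z^2) :=
          mul_le_mul_of_nonneg_right hle1 (Real.exp_pos _).le
      _ = Real.exp (4*K/z^2) := by rw [one_mul]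
      _ ≤ U := hexpz
  -- telescoping
  have hd : ∀ n : ℕ, dist (a n) (a (n+1)) ≤ U * (K/(y+n)^3) := by
    intro n
    rw [dist_eq_norm, ha n]
    have h1 : a n - a n * Pt lam (1/(y+n)) = a n * (1 - Pt lam (1/(y+n))) := by ring
    rw [h1, norm_mul, norm_sub_rev]
    have h2 : ‖a n‖ ≤ U := hUb (y+n) (hyn n)
    exact mul_le_mul h2 (hPz (y+n) (hyn n)).1 (norm_nonneg _) (by linarith)
  have hdist : ∀ N : ℕ, dist (a 0) (a N) ≤ U * (2*K/y^2) := by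
    intro N
    refine le_trans (dist_le_range_sum_dist a N) ?_
    calc ∑ n ∈ Finset.range N, dist (a n) (a (n+1))
        ≤ ∑ n ∈ Finset.range N, U * (K/(y+n)^3) :=
          Finset.sum_le_sum (fun n _ => hd n)
      _ = (U*K) * ∑ n ∈ Finset.range N, 1/(y+n)^3 := by
          rw [Finset.mul_sum]
          refine Finset.sum_congr rfl (fun n _ => ?_)
          rw [mul_one_div, ← mul_div_assoc]
      _ ≤ (U*K) * (2/y^2) := by
          apply mul_le_mul_of_nonneg_left (sum_cubic_bound hy2 N)
          positivity
      _ = U * (2*K/y^2) := by ring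
  have halim : Tendsto a atTop (𝓝 1) := tendsto_Gfun lam hy1
  have ha0 : a 0 = Gfun lam y := by
    show Gfun lam (y + ((0:ℕ):ℝ)) = Gfun lam y
    norm_num
  have hfinal : dist (a 0) 1 ≤ U * (2*K/y^2) := by
    apply le_of_forall_pos_le_add
    intro ε hε
    obtain ⟨N, hN⟩ := (Metric.tendsto_atTop.mp halim) ε hε
    calc dist (a 0) 1 ≤ dist (a 0) (a N) + dist (a N) 1 := dist_triangle _ _ _
      _ ≤ U * (2*K/y^2) + ε := add_le_add (hdist N) (hN N le_rfl).le
  rw [← ha0]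
  rw [show ‖a 0 - 1‖ = dist (a 0) 1 from (dist_eq_norm _ _).symm]
  refine le_trans hfinal (le_of_eq ?_)
  ring


private lemma diff_eq (lam : ℝ) {m : ℝ} (hm : 0 < m) :
    Complex.Gamma m / Complex.Gamma ((m:ℂ) + sC lam)
      - (m:ℂ) ^ (-sC lam) * (1 + (cR lam : ℂ) / (2 * m))
    = (m:ℂ) ^ (-sC lam) * (1 + (cR lam : ℂ) / (2 * m)) * (Gfun lam m - 1) := by
  have hm0 : (m:ℂ) ≠ 0 := Complex.ofReal_ne_zero.mpr hm.ne'
  have hΓs : Complex.Gamma ((m:ℂ) + sC lam) ≠ 0 := Gamma_shift_ne_zero hm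
  have hpow : (m:ℂ) ^ (-sC lam) = ((m:ℂ) ^ (sC lam))⁻¹ := Complex.cpow_neg _ _
  have hps : (m:ℂ) ^ (sC lam) ≠ 0 := cpow_sC_ne_zero hm
  have hd1 : (1:ℂ) + (cR lam : ℂ) / (2 * m) ≠ 0 := by
    have h1 : (0:ℝ) < cR lam / (2*m) := div_pos (cR_pos lam) (by linarith)
    have h2 : (1 : ℂ) + (cR lam : ℂ) / (2 * m) = ((1 + cR lam / (2*m) : ℝ) : ℂ) := by
      push_cast; ring
    rw [h2]
    exact_mod_cast (by linarith : (1 + cR lam / (2*m) : ℝ) ≠ 0)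
  have h2m : (2:ℂ) * m ≠ 0 := by simpa using hm0
  have h2mc : 2 * (m:ℂ) + (cR lam : ℂ) ≠ 0 := by
    intro h
    have := congrArg Complex.re h
    simp at this
    have := cR_pos lam
    linarith
  have r : (1:ℂ) + (cR lam : ℂ) / (2 * m) = (2*(m:ℂ) + (cR lam : ℂ))/(2*(m:ℂ)) := by
    field_simp
  rw [hpow]
  unfold Gfun
  rw [r]
  have h2mc' : (m:ℂ)*2 + cR lam ≠ 0 := by rw [mul_comm]; exact h2mc
  field_simp

private lemma norm_cpow_factor (lam : ℝ) {m : ℝ} (hm : 0 < m) :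
    ‖(m:ℂ) ^ (-sC lam) * (1 + (cR lam : ℂ) / (2 * m))‖
      = ‖(m:ℂ) ^ (-sC lam)‖ * (1 + cR lam / (2*m)) := by
  rw [norm_mul]
  congr 1
  have h2 : (1 : ℂ) + (cR lam : ℂ) / (2 * m) = ((1 + cR lam / (2*m) : ℝ) : ℂ) := by
    push_cast; ring
  rw [h2, Complex.norm_real, Real.norm_eq_abs, _root_.abs_of_pos]
  have h1 : (0:ℝ) < cR lam / (2*m) := div_pos (cR_pos lam) (by linarith)
  linarith

/-- Two-term asymptotic expansion of the Gamma ratio with complex shift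
`ℓ + 1 = 1/2 + iλ`: for `ℓ = -1/2 + iλ`,
`Γ(m)/Γ(m+ℓ+1) = m^{-ℓ-1} (1 + (1/4+λ²)/(2m)) + O(|m^{-ℓ-1}|/m²)` for `m ≥ m₀`. -/
theorem gamma_ratio_expansion (lam : ℝ) (m₀ : ℝ) (hm₀ : 0 < m₀) :
    ∃ C : ℝ, ∀ m : ℝ, m₀ ≤ m →
      ‖Complex.Gamma (m : ℂ) / Complex.Gamma ((m : ℂ) + (-1/2 + I * lam) + 1) -
          (m : ℂ) ^ (-(-1/2 + I * lam) - 1) *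
            (1 + ((1/4 + (lam : ℂ) ^ 2)) / (2 * m))‖ ≤
        C * ‖(m : ℂ) ^ (-(-1/2 + I * lam) - 1)‖ / m ^ 2 := by
  obtain ⟨M, C₂, hM2, hC₂0, htail⟩ := Gfun_tail lam
  set Mc : ℝ := max M m₀ with hMc
  have hMcM : M ≤ Mc := le_max_left _ _
  have hMc0 : 0 < Mc := lt_of_lt_of_le hm₀ (le_max_right _ _)
  -- continuity on the compact part
  set F : ℝ → ℂ := fun m => (Complex.Gamma m / Complex.Gamma ((m:ℂ) + sC lam)
      - (m:ℂ) ^ (-sC lam) * (1 + (cR lam : ℂ) / (2 * m))) * (m:ℂ)^2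
      * ((m:ℂ) ^ (-sC lam))⁻¹ with hF
  have hFcont : ContinuousOn F (Set.Icc m₀ Mc) := by
    intro m hm
    have hmpos : 0 < m := lt_of_lt_of_le hm₀ hm.1
    apply ContinuousAt.continuousWithinAt
    have hofReal : ContinuousAt (fun x : ℝ => (x:ℂ)) m :=
      Complex.continuous_ofReal.continuousAt
    have hg1 : ContinuousAt (fun x : ℝ => Complex.Gamma (x:ℂ)) m :=
      ((Complex.differentiableAt_Gamma _ (ofReal_ne_neg_nat hmpos)).continuousAt).comp hofReal
    have hadd : ContinuousAt (fun x : ℝ => (x:ℂ) + sC lam) m := hofReal.add continuousAt_const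
    have hg2 : ContinuousAt (fun x : ℝ => Complex.Gamma ((x:ℂ) + sC lam)) m :=
      ContinuousAt.comp (f := fun x : ℝ => (x:ℂ) + sC lam) (g := Complex.Gamma)
        ((Complex.differentiableAt_Gamma _ (sC_shift_ne_neg_nat hmpos)).continuousAt) hadd
    have hcp : ContinuousAt (fun x : ℝ => (x:ℂ) ^ (-sC lam)) m := by
      apply ContinuousAt.comp (g := fun z : ℂ => z ^ (-sC lam)) ?_ hofReal
      exact continuousAt_cpow_const (by simp [Complex.mem_slitPlane_iff, hmpos])
    have hlin : ContinuousAt (fun x : ℝ => (1 : ℂ) + (cR lam : ℂ) / (2 * (x:ℂ))) m := by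
      apply continuousAt_const.add
      apply continuousAt_const.div (continuousAt_const.mul hofReal)
      intro h
      have h2 : (2:ℂ) * m ≠ 0 := by
        simpa using Complex.ofReal_ne_zero.mpr hmpos.ne'
      exact h2 h
    have hsq : ContinuousAt (fun x : ℝ => ((x:ℂ))^2) m := hofReal.pow 2
    have hinv : ContinuousAt (fun x : ℝ => ((x:ℂ) ^ (-sC lam))⁻¹) m := by
      apply hcp.inv₀
      intro h
      rw [Complex.cpow_eq_zero_iff] at h
      exact (Complex.ofReal_ne_zero.mpr hmpos.ne') h.1
    exact (((hg1.div hg2 (Gamma_shift_ne_zero hmpos)).sub (hcp.mul hlin)).mul hsq).mul hinv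
  obtain ⟨C₁, hC₁⟩ := (isCompact_Icc (a := m₀) (b := Mc)).exists_bound_of_continuousOn hFcont
  refine ⟨max C₁ ((1 + cR lam / 2) * C₂), ?_⟩
  intro m hm
  have hmpos : 0 < m := lt_of_lt_of_le hm₀ hm
  -- rewrite the statement in canonical form
  have e1 : (m:ℂ) + (-1/2 + I * lam) + 1 = (m:ℂ) + sC lam := by
    rw [sC]; ring
  have e2 : (-(-1/2 + I * (lam:ℂ)) - 1 : ℂ) = -sC lam := by
    rw [sC]; ring
  have e3 : ((1:ℂ)/4 + (lam : ℂ)^2) = ((cR lam : ℝ) : ℂ) := by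
    rw [cR]; push_cast; ring
  rw [e1, e2, e3]
  have hnormpow : 0 ≤ ‖(m:ℂ) ^ (-sC lam)‖ := norm_nonneg _
  have hppos : (0:ℝ) < ‖(m:ℂ) ^ (-sC lam)‖ := by
    apply norm_pos_iff.mpr
    intro h
    rw [Complex.cpow_eq_zero_iff] at h
    exact (Complex.ofReal_ne_zero.mpr hmpos.ne') h.1
  by_cases hcase : m ≤ Mc
  · -- compact part
    have hmem : m ∈ Set.Icc m₀ Mc := ⟨hm, hcase⟩
    have hFb := hC₁ m hmem
    have hdiffF : Complex.Gamma m / Complex.Gamma ((m:ℂ) + sC lam)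
        - (m:ℂ) ^ (-sC lam) * (1 + (cR lam : ℂ) / (2 * m))
        = F m * (m:ℂ) ^ (-sC lam) / ((m:ℂ))^2 := by
      rw [hF]
      have hm2 : ((m:ℂ))^2 ≠ 0 := pow_ne_zero 2 (Complex.ofReal_ne_zero.mpr hmpos.ne')
      have hps : (m:ℂ) ^ (-sC lam) ≠ 0 := by
        intro h
        rw [Complex.cpow_eq_zero_iff] at h
        exact (Complex.ofReal_ne_zero.mpr hmpos.ne') h.1
      field_simp
      rw [mul_div_cancel_left₀ _ (Complex.ofReal_ne_zero.mpr hmpos.ne')]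
    rw [hdiffF, norm_div, norm_mul]
    have hm2norm : ‖((m:ℂ))^2‖ = m^2 := by
      rw [norm_pow, Complex.norm_real, Real.norm_eq_abs, _root_.abs_of_pos hmpos]
    rw [hm2norm]
    have hm2 : (0:ℝ) < m^2 := pow_pos hmpos 2
    have h9 : ‖F m‖ * ‖(m:ℂ) ^ (-sC lam)‖
        ≤ max C₁ ((1 + cR lam / 2) * C₂) * ‖(m:ℂ) ^ (-sC lam)‖ :=
      mul_le_mul_of_nonneg_right (le_trans hFb (le_max_left _ _)) hnormpow
    exact (div_le_div_iff_of_pos_right hm2).mpr h9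
  · -- tail part
    push_neg at hcase
    have hMm : M ≤ m := le_trans hMcM hcase.le
    have hgb := htail m hMm
    rw [diff_eq lam hmpos, norm_mul, norm_cpow_factor lam hmpos]
    have hm1 : (1:ℝ) ≤ m := by linarith
    have hfac : 1 + cR lam / (2*m) ≤ 1 + cR lam / 2 := by
      have h1 : cR lam / (2*m) ≤ cR lam / 2 := by
        apply div_le_div_of_nonneg_left (cR_pos lam).le (by norm_num)
        linarith
      linarith
    calc ‖(m:ℂ) ^ (-sC lam)‖ * (1 + cR lam / (2*m)) * ‖Gfun lam m - 1‖
        ≤ ‖(m:ℂ) ^ (-sC lam)‖ * (1 + cR lam / 2) * (C₂/m^2) := by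
          apply mul_le_mul
          · apply mul_le_mul_of_nonneg_left hfac hnormpow
          · exact hgb
          · exact norm_nonneg _
          · exact mul_nonneg hnormpow (by linarith [cR_pos lam])
      _ = ((1 + cR lam / 2) * C₂) * ‖(m:ℂ) ^ (-sC lam)‖ / m^2 := by ring
      _ ≤ max C₁ ((1 + cR lam / 2) * C₂) * ‖(m:ℂ) ^ (-sC lam)‖ / m^2 := by
          have hm2 : (0:ℝ) < m^2 := pow_pos hmpos 2
          exact (div_le_div_iff_of_pos_right hm2).mpr
            (mul_le_mul_of_nonneg_right (le_max_right _ _) hnormpow)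

end GammaRatioAux
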